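/- For any linear map φ : M_n → M_k, ‖φ‖_cb ≤ k · ‖φ‖. -/

import Mathlib

open scoped ComplexOrder

/-- The amplification `id_m ⊗ φ` of a linear map on matrices. -/
noncomputable def ampl {n k : ℕ} (m : ℕ)
    (φ : Matrix (Fin n) (Fin n) ℂ →ₗ[ℂ] Matrix (Fin k) (Fin k) ℂ) :
    Matrix (Fin m × Fin n) (Fin m × Fin n) ℂ →ₗ[ℂ]
      Matrix (Fin m × Fin k) (Fin m × Fin k) ℂ where
  toFun M := Matrix.of fun p q => φ (Matrix.of fun a b => M (p.1, a) (q.1, b)) p.2 q.2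
  map_add' M N := by
    ext p q
    show φ (Matrix.of fun a b => (M + N) (p.1, a) (q.1, b)) p.2 q.2
        = φ (Matrix.of fun a b => M (p.1, a) (q.1, b)) p.2 q.2
          + φ (Matrix.of fun a b => N (p.1, a) (q.1, b)) p.2 q.2
    rw [show (Matrix.of fun a b => (M + N) (p.1, a) (q.1, b))
        = (Matrix.of fun a b => M (p.1, a) (q.1, b))
          + (Matrix.of fun a b => N (p.1, a) (q.1, b)) from rfl, map_add]
    simp
  map_smul' c M := by
    ext p q
    show φ (Matrix.of fun a b => (c • M) (p.1, a) (q.1, b)) p.2 q.2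
        = c • φ (Matrix.of fun a b => M (p.1, a) (q.1, b)) p.2 q.2
    rw [show (Matrix.of fun a b => (c • M) (p.1, a) (q.1, b))
        = c • (Matrix.of fun a b => M (p.1, a) (q.1, b)) from rfl, map_smul]
    simp

/-- Operator (spectral) norm of a square complex matrix. -/
noncomputable def opN {n : Type*} [Fintype n] [DecidableEq n] (X : Matrix n n ℂ) : ℝ :=
  ‖(Matrix.toEuclideanCLM (𝕜 := ℂ) X : EuclideanSpace ℂ n →L[ℂ] EuclideanSpace ℂ n)‖

/-- Induced norm (w.r.t. operator norms) of a linear map between matrix algebras. -/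
noncomputable def mapNorm {a b : Type*} [Fintype a] [DecidableEq a] [Fintype b] [DecidableEq b]
    (ψ : Matrix a a ℂ →ₗ[ℂ] Matrix b b ℂ) : ℝ :=
  sSup {r : ℝ | ∃ X : Matrix a a ℂ, opN X ≤ 1 ∧ r = opN (ψ X)}

/-- The completely bounded norm `sup_m ‖id_m ⊗ φ‖`. -/
noncomputable def cbNorm {n k : ℕ}
    (φ : Matrix (Fin n) (Fin n) ℂ →ₗ[ℂ] Matrix (Fin k) (Fin k) ℂ) : ℝ :=
  ⨆ m : ℕ, mapNorm (ampl (m + 1) φ)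

/-- The positive semidefinite square root of a positive semidefinite matrix
(as defined in Mathlib, December 2024; removed since). -/
noncomputable def Matrix.PosSemidef.sqrt {𝕜 : Type*} [RCLike 𝕜] {n : Type*} [Fintype n]
    [DecidableEq n] {A : Matrix n n 𝕜} (hA : A.PosSemidef) : Matrix n n 𝕜 :=
  hA.1.eigenvectorUnitary.1 * Matrix.diagonal ((↑) ∘ (√·) ∘ hA.1.eigenvalues) *
  (star hA.1.eigenvectorUnitary : Matrix n n 𝕜)

/-- Trace norm of a matrix: the trace of `√(XᴴX)`. -/
noncomputable def traceNorm {a b : Type*} [Fintype a] [Fintype b] [DecidableEq b]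
    (X : Matrix a b ℂ) : ℝ :=
  ((Matrix.posSemidef_conjTranspose_mul_self X).sqrt.trace).re

/-- Induced trace-norm of a linear map between matrix algebras. -/
noncomputable def tMapNorm {a b : Type*} [Fintype a] [DecidableEq a] [Fintype b] [DecidableEq b]
    (ψ : Matrix a a ℂ →ₗ[ℂ] Matrix b b ℂ) : ℝ :=
  sSup {r : ℝ | ∃ X : Matrix a a ℂ, traceNorm X ≤ 1 ∧ r = traceNorm (ψ X)}

section Aux
open scoped Matrix.Norms.L2Operator

variable {I : Type*} [Fintype I] [DecidableEq I]

lemma opN_eq (X : Matrix I I ℂ) : opN X = ‖X‖ := rfl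

lemma opN_nonneg (X : Matrix I I ℂ) : 0 ≤ opN X := norm_nonneg _

lemma clm_apply (A : Matrix I I ℂ) (y : EuclideanSpace ℂ I) (i : I) :
    (Matrix.toEuclideanCLM (𝕜 := ℂ) A y) i = ∑ j, A i j * y j := rfl

lemma inner_clm (A : Matrix I I ℂ) (x y : EuclideanSpace ℂ I) :
    (inner ℂ x (Matrix.toEuclideanCLM (𝕜 := ℂ) A y) : ℂ)
      = ∑ i, ∑ j, (starRingEnd ℂ) (x i) * A i j * y j := by
  simp only [PiLp.inner_apply, RCLike.inner_apply, clm_apply, Finset.mul_sum, mul_assoc]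
  exact Finset.sum_congr rfl fun i _ => by
    rw [Finset.sum_mul]; exact Finset.sum_congr rfl fun j _ => by ring

lemma inner_le (A : Matrix I I ℂ) (x y : EuclideanSpace ℂ I) :
    ‖(inner ℂ x (Matrix.toEuclideanCLM (𝕜 := ℂ) A y) : ℂ)‖ ≤ opN A * ‖x‖ * ‖y‖ := by
  calc ‖(inner ℂ x (Matrix.toEuclideanCLM (𝕜 := ℂ) A y) : ℂ)‖
      ≤ ‖x‖ * ‖Matrix.toEuclideanCLM (𝕜 := ℂ) A y‖ := norm_inner_le_norm _ _
    _ ≤ ‖x‖ * (opN A * ‖y‖) := by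
        gcongr; exact (Matrix.toEuclideanCLM (𝕜 := ℂ) A).le_opNorm y
    _ = opN A * ‖x‖ * ‖y‖ := by ring

lemma opN_le_of_inner (A : Matrix I I ℂ) {C : ℝ} (hC : 0 ≤ C)
    (h : ∀ x y : EuclideanSpace ℂ I,
      ‖(inner ℂ x (Matrix.toEuclideanCLM (𝕜 := ℂ) A y) : ℂ)‖ ≤ C * ‖x‖ * ‖y‖) :
    opN A ≤ C := by
  refine ContinuousLinearMap.opNorm_le_bound _ hC fun y => ?_
  set z := Matrix.toEuclideanCLM (𝕜 := ℂ) A y with hz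
  rcases eq_or_lt_of_le (norm_nonneg z) with h0 | h0
  · rw [← h0]; positivity
  · have h2 : ‖z‖ * ‖z‖ ≤ (C * ‖y‖) * ‖z‖ := by
      calc ‖z‖ * ‖z‖ = ‖(inner ℂ z z : ℂ)‖ := by
            rw [inner_self_eq_norm_sq_to_K (𝕜 := ℂ)]
            simp [sq]
        _ ≤ C * ‖z‖ * ‖y‖ := h z y
        _ = (C * ‖y‖) * ‖z‖ := by ring
    exact le_of_mul_le_mul_right h2 h0

lemma entry_le (A : Matrix I I ℂ) (i j : I) : ‖A i j‖ ≤ opN A := by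
  have := inner_le A (EuclideanSpace.single i (1:ℂ)) (EuclideanSpace.single j (1:ℂ))
  rw [inner_clm] at this
  simp only [EuclideanSpace.single_apply, EuclideanSpace.norm_single, norm_one, mul_one] at this
  calc ‖A i j‖ = ‖∑ i', ∑ j', (starRingEnd ℂ) (if i' = i then (1:ℂ) else 0) * A i' j' *
        (if j' = j then (1:ℂ) else 0)‖ := by
        congr 1
        rw [Finset.sum_eq_single i, Finset.sum_eq_single j] <;>
          simp +contextual [Finset.sum_eq_single j]
    _ ≤ opN A := by simpa using this

/-- elementary tensor of vectors -/
noncomputable def tens {P A : Type*} [Fintype P] [Fintype A]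
    (w : EuclideanSpace ℂ P) (x : EuclideanSpace ℂ A) : EuclideanSpace ℂ (P × A) :=
  WithLp.toLp 2 (fun pa : P × A => w pa.1 * x pa.2)

lemma norm_tens {P A : Type*} [Fintype P] [Fintype A]
    (w : EuclideanSpace ℂ P) (x : EuclideanSpace ℂ A) : ‖tens w x‖ = ‖w‖ * ‖x‖ := by
  simp only [EuclideanSpace.norm_eq]
  rw [← Real.sqrt_mul (by positivity)]
  congr 1
  rw [Fintype.sum_prod_type, Finset.sum_mul_sum]
  simp [tens, mul_pow, norm_mul]

lemma opN_compress {P A : Type*} [Fintype P] [DecidableEq P] [Fintype A] [DecidableEq A]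
    (X : Matrix (P × A) (P × A) ℂ) (w u : EuclideanSpace ℂ P) :
    opN (Matrix.of fun a b => ∑ p, ∑ q, (starRingEnd ℂ) (w p) * u q * X (p, a) (q, b))
      ≤ ‖w‖ * ‖u‖ * opN X := by
  refine opN_le_of_inner _
    (mul_nonneg (mul_nonneg (norm_nonneg w) (norm_nonneg u)) (norm_nonneg _)) fun x y => ?_
  have key : (inner ℂ x (Matrix.toEuclideanCLM (𝕜 := ℂ)
      (Matrix.of fun a b => ∑ p, ∑ q, (starRingEnd ℂ) (w p) * u q * X (p, a) (q, b)) y) : ℂ)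
      = inner ℂ (tens w x) (Matrix.toEuclideanCLM (𝕜 := ℂ) X (tens u y)) := by
    rw [inner_clm, inner_clm]
    simp only [Matrix.of_apply, Fintype.sum_prod_type_right, tens, map_mul,
      Finset.mul_sum, Finset.sum_mul]
    refine Finset.sum_congr rfl fun a _ => ?_
    rw [Finset.sum_comm]
    refine Finset.sum_congr rfl fun b _ => ?_
    refine Finset.sum_congr rfl fun p _ => ?_
    refine Finset.sum_congr rfl fun q _ => ?_
    ring
  rw [key]
  calc ‖(inner ℂ (tens w x) (Matrix.toEuclideanCLM (𝕜 := ℂ) X (tens u y)) : ℂ)‖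
      ≤ opN X * ‖tens w x‖ * ‖tens u y‖ := inner_le _ _ _
    _ = ‖w‖ * ‖u‖ * opN X * ‖x‖ * ‖y‖ := by rw [norm_tens, norm_tens]; ring
section mapN
variable {a b : Type*} [Fintype a] [DecidableEq a] [Fintype b] [DecidableEq b]
  (ψ : Matrix a a ℂ →ₗ[ℂ] Matrix b b ℂ)

lemma mapNorm_bddAbove :
    BddAbove {r : ℝ | ∃ X : Matrix a a ℂ, opN X ≤ 1 ∧ r = opN (ψ X)} := by
  refine ⟨∑ i : a, ∑ j : a, opN (ψ (Matrix.single i j 1)), fun r hr => ?_⟩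
  obtain ⟨X, hX, rfl⟩ := hr
  have hXdec : ψ X = ∑ i : a, ∑ j : a, X i j • ψ (Matrix.single i j 1) := by
    conv_lhs => rw [Matrix.matrix_eq_sum_single X]
    rw [map_sum]
    refine Finset.sum_congr rfl fun i _ => ?_
    rw [map_sum]
    refine Finset.sum_congr rfl fun j _ => ?_
    rw [← map_smul]
    congr 1
    rw [Matrix.smul_single, smul_eq_mul, mul_one]
  rw [hXdec]
  simp only [opN_eq]
  refine le_trans (norm_sum_le _ _) (Finset.sum_le_sum fun i _ => ?_)
  refine le_trans (norm_sum_le _ _) (Finset.sum_le_sum fun j _ => ?_)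
  rw [norm_smul]
  calc ‖X i j‖ * ‖ψ (Matrix.single i j 1)‖
      ≤ 1 * ‖ψ (Matrix.single i j 1)‖ := by
        gcongr
        exact le_trans (entry_le X i j) hX
    _ = _ := one_mul _

lemma mapNorm_nonneg : 0 ≤ mapNorm ψ := by
  have h0 : (0:ℝ) ∈ {r : ℝ | ∃ X : Matrix a a ℂ, opN X ≤ 1 ∧ r = opN (ψ X)} :=
    ⟨0, by simp [opN_eq], by rw [map_zero]; simp [opN_eq]⟩
  exact Real.sSup_nonneg' ⟨0, h0, le_rfl⟩

lemma le_mapNorm {X : Matrix a a ℂ} (hX : opN X ≤ 1) : opN (ψ X) ≤ mapNorm ψ :=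
  le_csSup (mapNorm_bddAbove ψ) ⟨X, hX, rfl⟩

lemma opN_map_le (X : Matrix a a ℂ) : opN (ψ X) ≤ mapNorm ψ * opN X := by
  rcases eq_or_ne X 0 with rfl | hX
  · rw [map_zero]
    simp [opN_eq]
  · have hpos : 0 < opN X := by
      rw [opN_eq]
      exact norm_pos_iff.mpr hX
    have hnorm : ‖(((opN X)⁻¹ : ℝ) : ℂ)‖ = (opN X)⁻¹ := by
      rw [Complex.norm_real, Real.norm_eq_abs, abs_of_pos (by positivity)]
    have h1 : opN ((((opN X)⁻¹ : ℝ) : ℂ) • X) ≤ 1 := by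
      rw [opN_eq, norm_smul, hnorm, ← opN_eq, inv_mul_cancel₀ hpos.ne']
    have h2 := le_mapNorm ψ h1
    rw [map_smul, opN_eq, norm_smul, hnorm, ← opN_eq] at h2
    calc opN (ψ X) = ((opN X)⁻¹ * opN (ψ X)) * opN X := by field_simp
      _ ≤ mapNorm ψ * opN X := by gcongr

end mapN

/-- the `i`-th vslice of a vector on a product index -/
noncomputable def vslice {m k : ℕ} (x : EuclideanSpace ℂ (Fin m × Fin k)) (i : Fin k) :
    EuclideanSpace ℂ (Fin m) := WithLp.toLp 2 (fun p => x (p, i))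

lemma vslice_apply {m k : ℕ} (x : EuclideanSpace ℂ (Fin m × Fin k)) (i : Fin k) (p : Fin m) :
    vslice x i p = x (p, i) := rfl

lemma sum_norm_vslice_le {m k : ℕ} (x : EuclideanSpace ℂ (Fin m × Fin k)) :
    ∑ i : Fin k, ‖vslice x i‖ ≤ Real.sqrt k * ‖x‖ := by
  have hsq : ∑ i : Fin k, ‖vslice x i‖ ^ 2 = ‖x‖ ^ 2 := by
    have hx : ‖x‖ ^ 2 = ∑ pi : Fin m × Fin k, ‖x pi‖ ^ 2 := by
      rw [EuclideanSpace.norm_eq, Real.sq_sqrt (by positivity)]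
    rw [hx, Fintype.sum_prod_type_right]
    refine Finset.sum_congr rfl fun i _ => ?_
    rw [EuclideanSpace.norm_eq, Real.sq_sqrt (by positivity)]
    rfl
  have key : (∑ i : Fin k, ‖vslice x i‖) ^ 2 ≤ k * ‖x‖ ^ 2 := by
    calc (∑ i : Fin k, ‖vslice x i‖) ^ 2
        ≤ (Finset.univ.card : ℝ) * ∑ i : Fin k, ‖vslice x i‖ ^ 2 := sq_sum_le_card_mul_sum_sq
      _ = k * ‖x‖ ^ 2 := by rw [hsq]; simp
  calc ∑ i : Fin k, ‖vslice x i‖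
      = Real.sqrt ((∑ i : Fin k, ‖vslice x i‖) ^ 2) := by
        rw [Real.sqrt_sq (Finset.sum_nonneg fun i _ => norm_nonneg _)]
    _ ≤ Real.sqrt (k * ‖x‖ ^ 2) := Real.sqrt_le_sqrt key
    _ = Real.sqrt k * ‖x‖ := by
        rw [Real.sqrt_mul (by positivity), Real.sqrt_sq (norm_nonneg x)]

lemma ampl_apply {n k : ℕ} (m : ℕ)
    (φ : Matrix (Fin n) (Fin n) ℂ →ₗ[ℂ] Matrix (Fin k) (Fin k) ℂ)
    (X : Matrix (Fin m × Fin n) (Fin m × Fin n) ℂ) (pi qj : Fin m × Fin k) :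
    ampl m φ X pi qj
      = φ (Matrix.of fun a b => X (pi.1, a) (qj.1, b)) pi.2 qj.2 := rfl

lemma ampl_bound {n k : ℕ}
    (φ : Matrix (Fin n) (Fin n) ℂ →ₗ[ℂ] Matrix (Fin k) (Fin k) ℂ) (m : ℕ)
    (X : Matrix (Fin m × Fin n) (Fin m × Fin n) ℂ) (hX : opN X ≤ 1) :
    opN (ampl m φ X) ≤ (k : ℝ) * mapNorm φ := by
  refine opN_le_of_inner _ (mul_nonneg (Nat.cast_nonneg k) (mapNorm_nonneg φ)) fun x y => ?_
  rw [inner_clm]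
  set B : Fin m → Fin m → Matrix (Fin n) (Fin n) ℂ :=
    fun p q => Matrix.of fun a b => X (p, a) (q, b) with hB
  set Z : Fin k → Fin k → Matrix (Fin n) (Fin n) ℂ := fun i j =>
    Matrix.of fun a b => ∑ p, ∑ q,
      (starRingEnd ℂ) (vslice x i p) * vslice y j q * X (p, a) (q, b) with hZ
  have hZsum : ∀ i j, Z i j = ∑ p, ∑ q,
      ((starRingEnd ℂ) (x (p, i)) * y (q, j)) • B p q := by
    intro i j
    ext a b
    rw [hZ]
    simp only [Matrix.of_apply, Matrix.sum_apply, Matrix.smul_apply, smul_eq_mul, hB,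
      vslice_apply]
  have hsum : ∑ pi : Fin m × Fin k, ∑ qj : Fin m × Fin k,
      (starRingEnd ℂ) (x pi) * ampl m φ X pi qj * y qj
      = ∑ i : Fin k, ∑ j : Fin k, φ (Z i j) i j := by
    simp only [ampl_apply]
    rw [Fintype.sum_prod_type_right]
    refine Finset.sum_congr rfl fun i _ => ?_
    simp only [Fintype.sum_prod_type_right]
    rw [Finset.sum_comm]
    refine Finset.sum_congr rfl fun j _ => ?_
    rw [hZsum i j, map_sum]
    simp only [map_sum, map_smul, Matrix.sum_apply, Matrix.smul_apply, smul_eq_mul]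
    refine Finset.sum_congr rfl fun p _ => ?_
    refine Finset.sum_congr rfl fun q _ => ?_
    rw [hB]
    ring
  rw [hsum]
  have hterm : ∀ i j, ‖φ (Z i j) i j‖ ≤ mapNorm φ * ‖vslice x i‖ * ‖vslice y j‖ := by
    intro i j
    have h3 := opN_compress X (vslice x i) (vslice y j)
    have h4 : opN (Z i j) ≤ ‖vslice x i‖ * ‖vslice y j‖ := by
      refine le_trans h3 ?_
      calc ‖vslice x i‖ * ‖vslice y j‖ * opN X ≤ ‖vslice x i‖ * ‖vslice y j‖ * 1 := by
            refine mul_le_mul_of_nonneg_left hX (by positivity)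
        _ = ‖vslice x i‖ * ‖vslice y j‖ := mul_one _
    calc ‖φ (Z i j) i j‖ ≤ opN (φ (Z i j)) := entry_le _ i j
      _ ≤ mapNorm φ * opN (Z i j) := opN_map_le φ _
      _ ≤ mapNorm φ * (‖vslice x i‖ * ‖vslice y j‖) :=
          mul_le_mul_of_nonneg_left h4 (mapNorm_nonneg φ)
      _ = mapNorm φ * ‖vslice x i‖ * ‖vslice y j‖ := (mul_assoc _ _ _).symm
  calc ‖∑ i : Fin k, ∑ j : Fin k, φ (Z i j) i j‖
      ≤ ∑ i : Fin k, ∑ j : Fin k, ‖φ (Z i j) i j‖ :=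
        le_trans (norm_sum_le _ _) (Finset.sum_le_sum fun i _ => norm_sum_le _ _)
    _ ≤ ∑ i : Fin k, ∑ j : Fin k, mapNorm φ * ‖vslice x i‖ * ‖vslice y j‖ :=
        Finset.sum_le_sum fun i _ => Finset.sum_le_sum fun j _ => hterm i j
    _ = mapNorm φ * ((∑ i : Fin k, ‖vslice x i‖) * ∑ j : Fin k, ‖vslice y j‖) := by
        rw [Finset.sum_mul_sum, Finset.mul_sum]
        refine Finset.sum_congr rfl fun i _ => ?_
        rw [Finset.mul_sum]
        refine Finset.sum_congr rfl fun j _ => ?_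
        ring
    _ ≤ mapNorm φ * ((Real.sqrt k * ‖x‖) * (Real.sqrt k * ‖y‖)) := by
        refine mul_le_mul_of_nonneg_left ?_ (mapNorm_nonneg φ)
        refine mul_le_mul (sum_norm_vslice_le x) (sum_norm_vslice_le y)
          (Finset.sum_nonneg fun j _ => norm_nonneg _) (by positivity)
    _ = (k : ℝ) * mapNorm φ * ‖x‖ * ‖y‖ := by
        rw [show Real.sqrt (k:ℝ) * ‖x‖ * (Real.sqrt (k:ℝ) * ‖y‖)
            = (Real.sqrt (k:ℝ) * Real.sqrt (k:ℝ)) * (‖x‖ * ‖y‖) by ring,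
          Real.mul_self_sqrt (Nat.cast_nonneg k)]
        ring

end Aux

/-- `‖φ‖_cb ≤ k ⬝ ‖φ‖` for `φ : M_n → M_k`. -/
theorem cbNorm_le_k_mul_mapNorm {n k : ℕ}
    (φ : Matrix (Fin n) (Fin n) ℂ →ₗ[ℂ] Matrix (Fin k) (Fin k) ℂ) :
    cbNorm φ ≤ (k : ℝ) * mapNorm φ := by
  have hnn : 0 ≤ (k : ℝ) * mapNorm φ := mul_nonneg (Nat.cast_nonneg k) (mapNorm_nonneg φ)
  refine Real.iSup_le (fun m => ?_) hnn
  refine Real.sSup_le (fun r hr => ?_) hnn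
  obtain ⟨X, h1, rfl⟩ := hr
  exact ampl_bound φ (m + 1) X h1
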